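/- Let m ≥ 1, 1 ≤ r ≤ m, λ > 0, let P ∈ ℝ^{m×r} be partitioned by rows as P = [P_B; P_N] with P_B ∈ ℝ^{r×r} invertible, let y, γ ∈ ℝ^m, let e ∈ ℝ^m be the all-ones vector, and let J = mλ·I_r + PᵀP − (1/m)·(Pᵀe)(eᵀP) (which is invertible). Define α ∈ ℝ^m by α_B = (P_Bᵀ)⁻¹·J⁻¹·Pᵀ·(y − γ − (eᵀ(y − γ)/m)·e) on the first r coordinates and α_N = 0 on the remaining m − r coordinates. Then α solves the reduced low-rank system (mλ·I_r + PᵀP − (1/m)·Pᵀe·eᵀP)·Pᵀα = Pᵀ·((y − γ) − (eᵀ(y − γ)/m)·e). -/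

import Mathlib

open Matrix

/-- Sparse solution of the reduced low-rank system.  Rows of P ∈ ℝ^{m×r}
    (m = r + s, 1 ≤ r ≤ m) are split into an invertible top block
    P_B ∈ ℝ^{r×r} (indexed by `Sum.inl`) and a bottom block (indexed by
    `Sum.inr`).  With J = mλ·I_r + PᵀP − (1/m)·(Pᵀe)(eᵀP), the vector α given by
    α_B = (P_Bᵀ)⁻¹·J⁻¹·Pᵀ·(y − γ − (eᵀ(y − γ)/m)·e) on the first r coordinates
    and α_N = 0 elsewhere solves
    (mλ·I_r + PᵀP − (1/m)·Pᵀe·eᵀP)·Pᵀα = Pᵀ·((y − γ) − (eᵀ(y − γ)/m)·e). -/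
theorem sparse_solution_reduced_system
    (r s : ℕ) (hr : 1 ≤ r) (lam : ℝ) (hlam : 0 < lam)
    (P : Matrix (Fin r ⊕ Fin s) (Fin r) ℝ)
    (PB : Matrix (Fin r) (Fin r) ℝ) (hPB : PB = P.submatrix Sum.inl id)
    (hPBunit : IsUnit PB.det)
    (y γ : Fin r ⊕ Fin s → ℝ)
    (e : Fin r ⊕ Fin s → ℝ) (he : e = fun _ => 1)
    (m : ℝ) (hm : m = (r + s : ℕ))
    (J : Matrix (Fin r) (Fin r) ℝ)
    (hJ : J = (m * lam) • (1 : Matrix (Fin r) (Fin r) ℝ) + Pᵀ * P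
      - m⁻¹ • vecMulVec (Pᵀ.mulVec e) (Pᵀ.mulVec e))
    (α : Fin r ⊕ Fin s → ℝ)
    (hα : α = Sum.elim
      ((PBᵀ)⁻¹.mulVec (J⁻¹.mulVec (Pᵀ.mulVec (y - γ - ((e ⬝ᵥ (y - γ)) / m) • e))))
      0) :
    J.mulVec (Pᵀ.mulVec α)
      = Pᵀ.mulVec (y - γ - ((e ⬝ᵥ (y - γ)) / m) • e) := by
  -- J is positive definite, hence invertible.
  have hm0 : 0 < m := by
    rw [hm]; exact_mod_cast Nat.lt_of_lt_of_le Nat.zero_lt_one (le_trans hr (Nat.le_add_right r s))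
  have hA : ((m * lam) • (1 : Matrix (Fin r) (Fin r) ℝ)).PosDef := by
    refine Matrix.posDef_iff_dotProduct_mulVec.mpr ⟨by simp [Matrix.IsHermitian], fun x hx => ?_⟩
    rw [smul_mulVec, one_mulVec, dotProduct_smul]
    exact mul_pos (mul_pos hm0 hlam) (Matrix.dotProduct_star_self_pos_iff.mpr hx)
  have hwx : ∀ (x : Fin r → ℝ), (Pᵀ *ᵥ e) ⬝ᵥ x = e ⬝ᵥ (P *ᵥ x) := by
    intro x
    rw [dotProduct_comm, dotProduct_mulVec, vecMul_transpose, dotProduct_comm]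
  have hvv : ∀ (u x : Fin r → ℝ), vecMulVec u u *ᵥ x = (u ⬝ᵥ x) • u := by
    intro u x; ext i
    simp only [Matrix.mulVec, Matrix.vecMulVec_apply, dotProduct, Pi.smul_apply, smul_eq_mul,
      Finset.sum_mul]
    exact Finset.sum_congr rfl (fun j _ => by ring)
  have hB : (Pᵀ * P - m⁻¹ • vecMulVec (Pᵀ.mulVec e) (Pᵀ.mulVec e)).PosSemidef := by
    rw [Matrix.posSemidef_iff_dotProduct_mulVec]
    constructor
    · ext i j
      simp [Matrix.conjTranspose_apply, Matrix.sub_apply, Matrix.mul_apply,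
        Matrix.vecMulVec_apply, Matrix.transpose_apply, mul_comm]
    · intro x
      have key : star x ⬝ᵥ (Pᵀ * P - m⁻¹ • vecMulVec (Pᵀ.mulVec e) (Pᵀ.mulVec e)).mulVec x
          = (P.mulVec x) ⬝ᵥ (P.mulVec x) - m⁻¹ * ((e ⬝ᵥ P.mulVec x) * (e ⬝ᵥ P.mulVec x)) := by
        rw [sub_mulVec, dotProduct_sub, smul_mulVec, dotProduct_smul, star_trivial]
        congr 1
        · rw [← Matrix.mulVec_mulVec, Matrix.dotProduct_mulVec, vecMul_transpose]
        · rw [smul_eq_mul, hvv, dotProduct_smul, smul_eq_mul, dotProduct_comm x, hwx]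
      rw [key]
      set v := P.mulVec x
      have hcs : (∑ i, v i)^2 ≤ m * ∑ i, v i^2 := by
        have := sq_sum_le_card_mul_sum_sq (s := (Finset.univ : Finset (Fin r ⊕ Fin s))) (f := v)
        simpa [hm, Finset.card_univ] using this
      have h1 : e ⬝ᵥ v = ∑ i, v i := by simp [he, dotProduct]
      have h2 : v ⬝ᵥ v = ∑ i, v i^2 := by simp [dotProduct, sq]
      rw [h1, h2, sub_nonneg, ← sq, inv_mul_le_iff₀ hm0]
      exact hcs
  have hsum : J = (Pᵀ * P - m⁻¹ • vecMulVec (Pᵀ.mulVec e) (Pᵀ.mulVec e))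
      + (m * lam) • (1 : Matrix (Fin r) (Fin r) ℝ) := by rw [hJ]; abel
  have hJpd : J.PosDef := by rw [hsum]; exact Matrix.PosDef.posSemidef_add hB hA
  -- Main computation.
  set v := Pᵀ.mulVec (y - γ - ((e ⬝ᵥ (y - γ)) / m) • e) with hv
  have hgen : ∀ f : Fin r → ℝ, Pᵀ.mulVec (Sum.elim f 0) = PBᵀ.mulVec f := by
    intro f; ext j
    simp [Matrix.mulVec, dotProduct, Fintype.sum_sum_type, hPB,
      Matrix.transpose_apply, Matrix.submatrix_apply]
  have hstep1 : Pᵀ.mulVec α = PBᵀ.mulVec ((PBᵀ)⁻¹.mulVec (J⁻¹.mulVec v)) := by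
    rw [hα]; exact hgen _
  have hPBTunit : IsUnit (PBᵀ).det := by rwa [Matrix.det_transpose]
  have hstep2 : PBᵀ.mulVec ((PBᵀ)⁻¹.mulVec (J⁻¹.mulVec v)) = J⁻¹.mulVec v := by
    rw [Matrix.mulVec_mulVec, Matrix.mul_nonsing_inv _ hPBTunit, Matrix.one_mulVec]
  rw [hstep1, hstep2, Matrix.mulVec_mulVec,
    Matrix.mul_nonsing_inv _ (Matrix.isUnit_iff_isUnit_det _ |>.mp hJpd.isUnit),
    Matrix.one_mulVec]
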